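/- arXiv:2207.04408 — 2 statements merged into one kernel-verified Lean document; each statement's English description precedes it below -/
import Mathlib

section
/- Fix d ≥ 4, 1 ≤ m < 2d−1, n̲ = (n₂,…,n_m) and n̲' = (n₂,…,n_m,n_{m+1}), all entries ≥ 2. Then the polynomials satisfy p_{d,n̲'}(X) = (X^{n_{m+1}}+1)·p_{d,n̲}(X) + X·∏_{j=2}^{m}(X^{n_j}+1), and consequently the largest real root of p_{d,n̲'} is strictly smaller than the largest real root of p_{d,n̲}. -/
/-- The auxiliary polynomial `p_{d,n̲}` of the paper, evaluated at a real `x`. -/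
def pPoly (d m : ℕ) (n : ℕ → ℕ) (x : ℝ) : ℝ :=
  (x^2 - ((d : ℝ) - 1) * x - 1) * ∏ i ∈ Finset.Icc 2 m, (x^(n i) + 1)
    + x * ∑ i ∈ Finset.Icc 2 m, ∏ j ∈ (Finset.Icc 2 m).erase i, (x^(n j) + 1)

lemma pPoly_continuous (d m : ℕ) (n : ℕ → ℕ) : Continuous (fun x : ℝ => pPoly d m n x) := by
  unfold pPoly
  fun_prop

lemma pPoly_zero_neg (d m : ℕ) (n : ℕ → ℕ) : pPoly d m n 0 < 0 := by
  have h : pPoly d m n 0 = -(∏ i ∈ Finset.Icc 2 m, ((0:ℝ)^(n i) + 1)) := by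
    simp [pPoly]
  rw [h, neg_lt_zero]
  exact Finset.prod_pos fun i _ => by positivity

lemma pPoly_pos (d m : ℕ) (n : ℕ → ℕ) (hd : 4 ≤ d) (x : ℝ) (hx : (d:ℝ) ≤ x) :
    0 < pPoly d m n x := by
  have hd4 : (4:ℝ) ≤ (d:ℝ) := by exact_mod_cast hd
  have hx4 : (4:ℝ) ≤ x := le_trans hd4 hx
  have hx0 : (0:ℝ) < x := by linarith
  have h1 : 0 < x^2 - ((d:ℝ) - 1) * x - 1 := by nlinarith
  have hp : 0 < ∏ i ∈ Finset.Icc 2 m, (x^(n i) + 1) :=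
    Finset.prod_pos fun i _ => by positivity
  have hs : 0 ≤ ∑ i ∈ Finset.Icc 2 m, ∏ j ∈ (Finset.Icc 2 m).erase i, (x^(n j) + 1) :=
    Finset.sum_nonneg fun i _ => le_of_lt (Finset.prod_pos fun j _ => by positivity)
  exact add_pos_of_pos_of_nonneg (mul_pos h1 hp) (mul_nonneg hx0.le hs)

lemma pPoly_step (d m : ℕ) (hm : 1 ≤ m) (n : ℕ → ℕ) (x : ℝ) :
    pPoly d (m+1) n x
      = (x^(n (m+1)) + 1) * pPoly d m n x + x * ∏ j ∈ Finset.Icc 2 m, (x^(n j) + 1) := by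
  have hnot : m+1 ∉ Finset.Icc 2 m := by simp
  have hins : Finset.Icc 2 (m+1) = insert (m+1) (Finset.Icc 2 m) := by
    ext j
    simp only [Finset.mem_Icc, Finset.mem_insert]
    constructor
    · rintro ⟨h1, h2⟩
      rcases Nat.lt_or_ge j (m+1) with h3 | h3
      · exact Or.inr ⟨h1, Nat.lt_succ_iff.mp h3⟩
      · exact Or.inl (Nat.le_antisymm h2 h3)
    · rintro (rfl | ⟨h1, h2⟩)
      · exact ⟨by omega, le_refl _⟩
      · exact ⟨h1, Nat.le_succ_of_le h2⟩
  rw [pPoly, pPoly, hins, Finset.prod_insert hnot, Finset.sum_insert hnot,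
    Finset.erase_insert hnot]
  have hsum : ∀ i ∈ Finset.Icc 2 m,
      (∏ j ∈ (insert (m+1) (Finset.Icc 2 m)).erase i, (x^(n j) + 1))
        = (x^(n (m+1)) + 1) * ∏ j ∈ (Finset.Icc 2 m).erase i, (x^(n j) + 1) := by
    intro i hi
    rw [Finset.erase_insert_of_ne (by intro h; exact hnot (h ▸ hi)),
      Finset.prod_insert (fun h => hnot (Finset.mem_of_mem_erase h))]
  rw [Finset.sum_congr rfl hsum, ← Finset.mul_sum]
  ring

/-- For the extended tuple `n̲' = (n₂,…,n_m,n_{m+1})` one has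
`p_{d,n̲'}(X) = (X^{n_{m+1}}+1)·p_{d,n̲}(X) + X·∏_{j=2}^{m}(X^{n_j}+1)`, and
consequently the largest real root of `p_{d,n̲'}` is strictly smaller than the
largest real root of `p_{d,n̲}`. -/
theorem stmt4 (d m : ℕ) (hd : 4 ≤ d) (hm1 : 1 ≤ m) (hm2 : m < 2*d - 1)
    (n : ℕ → ℕ) (hn : ∀ i ∈ Finset.Icc 2 (m+1), 2 ≤ n i)
    (lam lam' : ℝ)
    (hlam : IsGreatest {x : ℝ | pPoly d m n x = 0} lam)
    (hlam' : IsGreatest {x : ℝ | pPoly d (m+1) n x = 0} lam') :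
    (∀ x : ℝ, pPoly d (m+1) n x
        = (x^(n (m+1)) + 1) * pPoly d m n x + x * ∏ j ∈ Finset.Icc 2 m, (x^(n j) + 1)) ∧
    lam' < lam := by
  refine ⟨pPoly_step d m hm1 n, ?_⟩
  have hd0 : (0:ℝ) < (d:ℝ) := by
    have : (4:ℝ) ≤ (d:ℝ) := by exact_mod_cast hd
    linarith
  -- lam' > 0 : root of p_{m+1} in (0, d) by IVT
  have hlam'pos : 0 < lam' := by
    have hivt := intermediate_value_Ioo (le_of_lt hd0)
      ((pPoly_continuous d (m+1) n).continuousOn)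
    have h0 : (0:ℝ) ∈ Set.Ioo (pPoly d (m+1) n 0) (pPoly d (m+1) n (d:ℝ)) :=
      ⟨pPoly_zero_neg d (m+1) n, pPoly_pos d (m+1) n hd _ le_rfl⟩
    obtain ⟨c, hc, hc0⟩ := hivt h0
    exact lt_of_lt_of_le hc.1 (hlam'.2 hc0)
  -- p_m(lam') < 0
  have hroot' : pPoly d (m+1) n lam' = 0 := hlam'.1
  have hprodpos : 0 < ∏ j ∈ Finset.Icc 2 m, (lam'^(n j) + 1) :=
    Finset.prod_pos fun j _ => by positivity
  have hkey : pPoly d m n lam' < 0 := by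
    have h := pPoly_step d m hm1 n lam'
    rw [hroot'] at h
    have hpos : 0 < lam' * ∏ j ∈ Finset.Icc 2 m, (lam'^(n j) + 1) :=
      mul_pos hlam'pos hprodpos
    have hfac : (0:ℝ) < lam'^(n (m+1)) + 1 := by positivity
    nlinarith [mul_pos hfac hprodpos]
  -- lam' < d since p_{m+1}(x) > 0 for x ≥ d
  have hlam'lt : lam' < (d:ℝ) := by
    by_contra h
    push_neg at h
    exact absurd hroot' (ne_of_gt (pPoly_pos d (m+1) n hd lam' h))
  -- IVT on p_m between lam' and d
  have hivt := intermediate_value_Ioo hlam'lt.le ((pPoly_continuous d m n).continuousOn)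
  have h0 : (0:ℝ) ∈ Set.Ioo (pPoly d m n lam') (pPoly d m n (d:ℝ)) :=
    ⟨hkey, pPoly_pos d m n hd _ le_rfl⟩
  obtain ⟨c, hc, hc0⟩ := hivt h0
  exact lt_of_lt_of_le hc.1 (hlam.2 hc0)
end

section
/- Fix d ≥ 4, 2 ≤ m < 2d−1, and n̲ = (n₂,…,n_{m−1}) with each n_i ≥ 2. For n_m ≥ 2 let n̲_{n_m} = (n₂,…,n_{m−1},n_m). Then the sequence n_m ↦ λ_{d,n̲_{n_m}} of largest real roots converges to λ_{d,n̲} as n_m → ∞, and it is bounded above by λ_{d,n̲}. -/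
/-! ### Auxiliary elementary inequalities -/

lemma keyIneq (d k x : ℝ) (hd : 4 ≤ d) (hk0 : 0 ≤ k) (hk : k ≤ 2*d-3) (hx : 2 ≤ x)
    (hA : 0 ≤ x^3 - (d-1)*x^2 - x + k) : 0 < 2*x^3 - (d-1)*x^2 - k := by
  rcases le_or_gt (x^3 + x) (2*k) with h | h
  · exfalso
    have h3x : 3*x < 2*d - 1 := by
      nlinarith [sq_nonneg x, sq_nonneg (x-2), sq_nonneg (2*d-1-3*x), sq_nonneg (x+2)]
    nlinarith [sq_nonneg (x-2), mul_nonneg (sub_nonneg.2 hx) (sub_nonneg.2 hx)]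
  · nlinarith

lemma pow_ge_aux (x : ℝ) (hx : 2 ≤ x) : ∀ n : ℕ, 2 ≤ n → ((n:ℝ) - 1) ≤ x^(n-2)
  | 2, _ => by norm_num
  | (k+3), _ => by
      have ih := pow_ge_aux x hx (k+2) (by omega)
      have h2 : (k+3) - 2 = ((k+2)-2) + 1 := by omega
      rw [h2, pow_succ]
      have h1 : (1:ℝ) ≤ x^((k+2)-2) := one_le_pow₀ (by linarith)
      push_cast
      push_cast at ih
      nlinarith

lemma pow_sub_pow_le_aux (x y : ℝ) (hx : 0 ≤ x) (hxy : x ≤ y) :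
    ∀ k : ℕ, y^k - x^k ≤ (y-x) * k * y^(k-1)
  | 0 => by simp
  | (k+1) => by
      have ih := pow_sub_pow_le_aux x y hx hxy k
      have hy : 0 ≤ y := le_trans hx hxy
      have hxk : x^k ≤ y^k := pow_le_pow_left₀ hx hxy k
      rcases Nat.eq_zero_or_pos k with rfl | hk
      · simp
      · have h2 : y * (y^(k-1)) = y^k := by rw [← pow_succ']; congr 1; omega
        have h3 : (k+1) - 1 = k := by omega
        rw [h3]
        have hxy0 : 0 ≤ y - x := by linarith
        have e1 : y * (y^k - x^k) ≤ y * ((y-x)*k*y^(k-1)) :=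
          mul_le_mul_of_nonneg_left ih hy
        have e2 : (y-x)*x^k ≤ (y-x)*y^k := mul_le_mul_of_nonneg_left hxk hxy0
        have h4 : y*((y-x)*k*y^(k-1)) = (y-x)*k*y^k := by
          rw [show y*((y-x)*k*y^(k-1)) = (y-x)*k*(y*y^(k-1)) by ring, h2]
        have h5 : y^(k+1) - x^(k+1) = y*(y^k - x^k) + (y-x)*x^k := by ring
        push_cast
        nlinarith

lemma term_le (x : ℝ) (hx : 2 ≤ x) (n : ℕ) (hn : 2 ≤ n) : x/(x^n+1) ≤ 1/x := by
  have hx0 : (0:ℝ) < x := by linarith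
  rw [div_le_div_iff₀ (by positivity) hx0]
  have : x^2 ≤ x^n := pow_le_pow_right₀ (by linarith) hn
  nlinarith

lemma term_diff (x y : ℝ) (hx : 2 ≤ x) (hxy : x ≤ y) (n : ℕ) (hn : 2 ≤ n) :
    -((y-x)/(x*y)) ≤ y/(y^n+1) - x/(x^n+1) := by
  have hx0 : (0:ℝ) < x := by linarith
  have hy0 : (0:ℝ) < y := by linarith
  have hy2 : (2:ℝ) ≤ y := le_trans hx hxy
  have hdx : (0:ℝ) < x^n + 1 := by positivity
  have hdy : (0:ℝ) < y^n + 1 := by positivity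
  rw [div_sub_div _ _ (ne_of_gt hdy) (ne_of_gt hdx)]
  rw [neg_le, ← sub_nonneg]
  have heq : (y - x) / (x * y) - -((y * (x ^ n + 1) - (y ^ n + 1) * x) / ((y ^ n + 1) * (x ^ n + 1)))
      = ((y-x)*((y^n+1)*(x^n+1)) + (y*(x^n+1) - (y^n+1)*x)*(x*y)) / ((x*y)*((y^n+1)*(x^n+1))) := by
    field_simp
    ring
  rw [heq]
  apply div_nonneg _ (by positivity)
  set a := x^(n-2) with ha
  set b := y^(n-2) with hb
  have hxn : x^n = x^2*a := by rw [ha, ← pow_add]; congr 1; omega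
  have hyn : y^n = y^2*b := by rw [hb, ← pow_add]; congr 1; omega
  have hxn1 : x^(n-1) = x*a := by rw [ha, ← pow_succ']; congr 1; omega
  have hyn1 : y^(n-1) = y*b := by rw [hb, ← pow_succ']; congr 1; omega
  have hF2 : ((n:ℝ)-1) ≤ a := pow_ge_aux x hx n hn
  have hF3 : a ≤ b := pow_le_pow_left₀ (by linarith) hxy _
  have ha0 : (1:ℝ) ≤ a := one_le_pow₀ (by linarith)
  have hF1 : y*b - x*a ≤ (y-x)*((n:ℝ)-1)*b := by
    have := pow_sub_pow_le_aux x y (le_of_lt hx0) hxy (n-1)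
    rw [hxn1, hyn1] at this
    have hcast : ((n-1 : ℕ):ℝ) = (n:ℝ)-1 := by
      have : 1 ≤ n := by omega
      push_cast [this]; ring
    rw [hcast] at this
    have hexp : (n-1)-1 = n-2 := by omega
    rw [hexp, ← hb] at this
    exact this
  have hyx : 0 ≤ y - x := by linarith
  have hb0 : (1:ℝ) ≤ b := le_trans ha0 hF3
  rw [hxn, hyn]
  have hinner : 0 ≤ (y^2*b+1)*(x^2*a+1) + x*y - x^2*y^2*((n:ℝ)-1)*b := by
    nlinarith [mul_nonneg (mul_nonneg (by positivity : (0:ℝ) ≤ x^2*y^2) (by linarith : (0:ℝ) ≤ b)) (by linarith : (0:ℝ) ≤ a - ((n:ℝ)-1)),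
      mul_pos hx0 hy0, mul_nonneg (by positivity : (0:ℝ) ≤ y^2) (by linarith : (0:ℝ) ≤ b),
      mul_nonneg (by positivity : (0:ℝ) ≤ x^2) (by linarith : (0:ℝ) ≤ a)]
  have s1 : x^2*y^2*(y*b-x*a) ≤ x^2*y^2*((y-x)*((n:ℝ)-1)*b) :=
    mul_le_mul_of_nonneg_left hF1 (by positivity)
  have s2 : 0 ≤ (y-x)*((y^2*b+1)*(x^2*a+1) + x*y - x^2*y^2*((n:ℝ)-1)*b) := mul_nonneg hyx hinner
  nlinarith [s1, s2]

/-! ### The rational function `g` and basic facts about `pPoly` -/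

noncomputable def gFun (d M : ℕ) (n : ℕ → ℕ) (x : ℝ) : ℝ :=
  x^2 - ((d:ℝ)-1)*x - 1 + ∑ i ∈ Finset.Icc 2 M, x/(x^(n i)+1)

lemma pPoly_eq_g (d M : ℕ) (n : ℕ → ℕ) (x : ℝ) (hx : 0 < x) :
    pPoly d M n x = (∏ i ∈ Finset.Icc 2 M, (x^(n i)+1)) * gFun d M n x := by
  unfold pPoly gFun
  have key : ∀ i ∈ Finset.Icc 2 M,
      (∏ j ∈ Finset.Icc 2 M, (x^(n j)+1)) * (x/(x^(n i)+1))
        = x * ∏ j ∈ (Finset.Icc 2 M).erase i, (x^(n j)+1) := by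
    intro i hi
    rw [← Finset.mul_prod_erase _ _ hi]
    have hne : x^(n i)+1 ≠ 0 := by positivity
    field_simp
  conv_rhs => rw [mul_add, Finset.mul_sum]
  rw [Finset.sum_congr rfl key, ← Finset.mul_sum]
  ring

lemma pPoly_continuous_s5 (d M : ℕ) (n : ℕ → ℕ) : Continuous (pPoly d M n) := by
  unfold pPoly
  apply Continuous.add
  · exact (by continuity : Continuous fun x : ℝ => x^2 - ((d:ℝ)-1)*x - 1).mul
      (continuous_finset_prod _ fun i _ => by continuity)
  · exact continuous_id'.mul
      (continuous_finset_sum _ fun i _ => continuous_finset_prod _ fun j _ => by continuity)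

lemma prodPos (M : ℕ) (n : ℕ → ℕ) (x : ℝ) (hx : 0 < x) :
    0 < ∏ i ∈ Finset.Icc 2 M, (x^(n i)+1) :=
  Finset.prod_pos fun i _ => by positivity

lemma sum_terms_le (d M : ℕ) (n : ℕ → ℕ) (x : ℝ) (hx : 2 ≤ x)
    (hn2 : ∀ i ∈ Finset.Icc 2 M, 2 ≤ n i) :
    ∑ i ∈ Finset.Icc 2 M, x/(x^(n i)+1) ≤ ((Finset.Icc 2 M).card : ℝ) * (1/x) := by
  have := Finset.sum_le_card_nsmul (Finset.Icc 2 M) (fun i => x/(x^(n i)+1)) (1/x)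
    (fun i hi => term_le x hx (n i) (hn2 i hi))
  simpa [nsmul_eq_mul] using this

lemma sum_terms_nonneg (M : ℕ) (n : ℕ → ℕ) (x : ℝ) (hx : 0 < x) :
    0 ≤ ∑ i ∈ Finset.Icc 2 M, x/(x^(n i)+1) :=
  Finset.sum_nonneg fun i _ => by positivity

lemma g_stays_pos (d M : ℕ) (n : ℕ → ℕ) (hd : 4 ≤ d)
    (hcard : ((Finset.Icc 2 M).card : ℝ) ≤ 2*(d:ℝ)-3)
    (hn2 : ∀ i ∈ Finset.Icc 2 M, 2 ≤ n i)
    {x y : ℝ} (hx : 2 ≤ x) (hxy : x < y) (hgx : 0 ≤ gFun d M n x) :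
    0 < gFun d M n y := by
  set k := ((Finset.Icc 2 M).card : ℝ) with hkdef
  have hk0 : 0 ≤ k := Nat.cast_nonneg _
  have hx0 : (0:ℝ) < x := by linarith
  have hy0 : (0:ℝ) < y := by linarith
  have hdr : (4:ℝ) ≤ (d:ℝ) := by exact_mod_cast hd
  have hsum := sum_terms_le d M n x hx hn2
  have h2 : -(k/x) ≤ x^2-((d:ℝ)-1)*x-1 := by
    have : k * (1/x) = k/x := by ring
    rw [this] at hsum
    unfold gFun at hgx
    linarith
  have hA : 0 ≤ x^3 - ((d:ℝ)-1)*x^2 - x + k := by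
    have h3 := mul_le_mul_of_nonneg_right h2 hx0.le
    rw [neg_mul, div_mul_cancel₀ _ (ne_of_gt hx0)] at h3
    nlinarith [h3]
  have hB := keyIneq (d:ℝ) k x hdr hk0 hcard hx hA
  have hfac0 : 0 < 2*x-((d:ℝ)-1)-k/x^2 := by
    have heq : 2*x-((d:ℝ)-1)-k/x^2 = (2*x^3-((d:ℝ)-1)*x^2-k)/x^2 := by
      field_simp
    rw [heq]
    exact div_pos hB (by positivity)
  have hdiv : k/(x*y) ≤ k/x^2 := by
    apply div_le_div_of_nonneg_left hk0 (by positivity)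
    nlinarith
  have hfac : 0 < y+x-((d:ℝ)-1)-k/(x*y) := by linarith
  have hsd : -(k*((y-x)/(x*y))) ≤
      ∑ i ∈ Finset.Icc 2 M, (y/(y^(n i)+1) - x/(x^(n i)+1)) := by
    have := Finset.card_nsmul_le_sum (Finset.Icc 2 M)
      (fun i => y/(y^(n i)+1) - x/(x^(n i)+1)) (-((y-x)/(x*y)))
      (fun i hi => term_diff x y hx hxy.le (n i) (hn2 i hi))
    rw [nsmul_eq_mul, mul_neg] at this
    exact this
  have hsplit : ∑ i ∈ Finset.Icc 2 M, (y/(y^(n i)+1) - x/(x^(n i)+1))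
      = (∑ i ∈ Finset.Icc 2 M, y/(y^(n i)+1)) - ∑ i ∈ Finset.Icc 2 M, x/(x^(n i)+1) :=
    Finset.sum_sub_distrib _ _
  have hkey : (y^2-x^2) - ((d:ℝ)-1)*(y-x) - k*((y-x)/(x*y))
      = (y-x)*(y+x-((d:ℝ)-1)-k/(x*y)) := by
    field_simp
    ring
  have hpos : 0 < (y-x)*(y+x-((d:ℝ)-1)-k/(x*y)) := mul_pos (by linarith) hfac
  unfold gFun at hgx ⊢
  rw [hsplit] at hsd
  nlinarith [hsd, hpos, hkey]

/-! ### Sign facts about `pPoly` -/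

section
variable (d M : ℕ) (n : ℕ → ℕ) (hd : 4 ≤ d)
  (hcard : ((Finset.Icc 2 M).card : ℝ) ≤ 2*(d:ℝ)-3)
  (hn2 : ∀ i ∈ Finset.Icc 2 M, 2 ≤ n i)

include hd hcard hn2

lemma p_neg_two : pPoly d M n 2 < 0 := by
  have hdr : (4:ℝ) ≤ (d:ℝ) := by exact_mod_cast hd
  have hg : gFun d M n 2 < 0 := by
    have h1 := sum_terms_le d M n 2 le_rfl hn2
    unfold gFun
    nlinarith
  rw [pPoly_eq_g d M n 2 (by norm_num)]
  exact mul_neg_of_pos_of_neg (prodPos M n 2 (by norm_num)) hg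

omit hcard hn2 in
lemma p_pos_big {x : ℝ} (hx : (d:ℝ) ≤ x) : 0 < pPoly d M n x := by
  have hdr : (4:ℝ) ≤ (d:ℝ) := by exact_mod_cast hd
  have hx0 : (0:ℝ) < x := by linarith
  have hg : 0 < gFun d M n x := by
    have := sum_terms_nonneg M n x hx0
    unfold gFun
    nlinarith
  rw [pPoly_eq_g d M n x hx0]
  exact mul_pos (prodPos M n x hx0) hg

lemma p_stays_pos {x y : ℝ} (hx : 2 ≤ x) (hxy : x < y) (hpx : 0 ≤ pPoly d M n x) :
    0 < pPoly d M n y := by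
  have hx0 : (0:ℝ) < x := by linarith
  have hy0 : (0:ℝ) < y := by linarith
  have hgx : 0 ≤ gFun d M n x := by
    rw [pPoly_eq_g d M n x hx0] at hpx
    exact nonneg_of_mul_nonneg_right hpx (prodPos M n x hx0)
  rw [pPoly_eq_g d M n y hy0]
  exact mul_pos (prodPos M n y hy0) (g_stays_pos d M n hd hcard hn2 hx hxy hgx)

/-- All the facts we need about the greatest root. -/
lemma root_facts {lam : ℝ} (hlam : IsGreatest {x : ℝ | pPoly d M n x = 0} lam) :
    2 < lam ∧ lam < d ∧ (∀ y, lam < y → 0 < pPoly d M n y) ∧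
      (∀ x, 2 ≤ x → x < lam → pPoly d M n x < 0) := by
  have hdr : (4:ℝ) ≤ (d:ℝ) := by exact_mod_cast hd
  have hcont := pPoly_continuous_s5 d M n
  have hp2 := p_neg_two d M n hd hcard hn2
  have hpd : 0 < pPoly d M n d := p_pos_big d M n hd le_rfl
  have h2d : (2:ℝ) < (d:ℝ) := by linarith
  obtain ⟨c, hc, hpc⟩ : ∃ c ∈ Set.Ioo (2:ℝ) (d:ℝ), pPoly d M n c = 0 := by
    have := intermediate_value_Ioo h2d.le hcont.continuousOn
    obtain ⟨c, hc, hpc⟩ := this (⟨hp2, hpd⟩ : (0:ℝ) ∈ Set.Ioo _ _)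
    exact ⟨c, hc, hpc⟩
  have h2lam : 2 < lam := lt_of_lt_of_le hc.1 (hlam.2 hpc)
  have hlam0 : pPoly d M n lam = 0 := hlam.1
  have hlamd : lam < d := by
    by_contra h
    push_neg at h
    exact absurd hlam0 (ne_of_gt (p_pos_big d M n hd h))
  have hup : ∀ y, lam < y → 0 < pPoly d M n y := by
    intro y hy
    rcases lt_trichotomy (pPoly d M n y) 0 with h | h | h
    · exfalso
      set z := max (y+1) (d:ℝ) with hz
      have hyz : y < z := lt_of_lt_of_le (by linarith) (le_max_left _ _)
      have hpz : 0 < pPoly d M n z := p_pos_big d M n hd (le_max_right _ _)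
      have := intermediate_value_Ioo hyz.le hcont.continuousOn
      obtain ⟨c', hc', hpc'⟩ := this (⟨h, hpz⟩ : (0:ℝ) ∈ Set.Ioo _ _)
      have : c' ≤ lam := hlam.2 hpc'
      linarith [hc'.1]
    · exact absurd (hlam.2 h) (not_le.mpr hy)
    · exact h
  refine ⟨h2lam, hlamd, hup, fun x hx hxlam => ?_⟩
  by_contra h
  push_neg at h
  have := p_stays_pos d M n hd hcard hn2 hx hxlam h
  rw [hlam0] at this
  exact lt_irrefl 0 this

end

/-! ### The recursion identity -/

lemma pPoly_rec (d m N : ℕ) (n : ℕ → ℕ) (hm : 2 ≤ m) (x : ℝ) :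
    pPoly d m (Function.update n m N) x
      = (x^N+1) * pPoly d (m-1) n x + x * ∏ i ∈ Finset.Icc 2 (m-1), (x^(n i)+1) := by
  have hins : Finset.Icc 2 m = insert m (Finset.Icc 2 (m-1)) := by
    ext j; simp only [Finset.mem_Icc, Finset.mem_insert]; omega
  have hnm : m ∉ Finset.Icc 2 (m-1) := by simp only [Finset.mem_Icc]; omega
  set f : ℕ → ℝ := fun j => x^(Function.update n m N j)+1 with hf
  have hfm : f m = x^N+1 := by simp [hf]
  have hfS : ∀ j ∈ Finset.Icc 2 (m-1), f j = x^(n j)+1 := by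
    intro j hj
    have hj' : j ≠ m := by simp only [Finset.mem_Icc] at hj; omega
    simp [hf, Function.update_of_ne hj']
  have hprodS : ∏ j ∈ Finset.Icc 2 (m-1), f j = ∏ j ∈ Finset.Icc 2 (m-1), (x^(n j)+1) :=
    Finset.prod_congr rfl hfS
  have hsum : ∑ i ∈ Finset.Icc 2 (m-1), ∏ j ∈ (insert m (Finset.Icc 2 (m-1))).erase i, f j
      = (x^N+1) * ∑ i ∈ Finset.Icc 2 (m-1), ∏ j ∈ (Finset.Icc 2 (m-1)).erase i, (x^(n j)+1) := by
    rw [Finset.mul_sum]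
    apply Finset.sum_congr rfl
    intro i hi
    have hine : m ≠ i := by simp only [Finset.mem_Icc] at hi; omega
    rw [Finset.erase_insert_of_ne hine]
    have hnm' : m ∉ (Finset.Icc 2 (m-1)).erase i := fun h => hnm (Finset.mem_of_mem_erase h)
    rw [Finset.prod_insert hnm', hfm]
    congr 1
    exact Finset.prod_congr rfl (fun j hj => hfS j (Finset.mem_of_mem_erase hj))
  show (x^2 - ((d:ℝ)-1)*x - 1) * ∏ i ∈ Finset.Icc 2 m, f i
      + x * ∑ i ∈ Finset.Icc 2 m, ∏ j ∈ (Finset.Icc 2 m).erase i, f j = _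
  rw [hins, Finset.prod_insert hnm, Finset.sum_insert hnm, Finset.erase_insert hnm,
    hprodS, hsum, hfm]
  unfold pPoly
  ring

/-! ### Main theorem -/

/-- Extending the tuple `n̲ = (n₂,…,n_{m−1})` by a last entry `n_m`, the largest real
roots `λ_{d,(n₂,…,n_m)}` converge to `λ_{d,n̲}` as `n_m → ∞`, and are bounded above
by `λ_{d,n̲}`. -/
theorem stmt5 (d m : ℕ) (hd : 4 ≤ d) (hm1 : 2 ≤ m) (hm2 : m < 2*d - 1)
    (n : ℕ → ℕ) (hn : ∀ i ∈ Finset.Icc 2 (m-1), 2 ≤ n i)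
    (lamInf : ℝ) (hlamInf : IsGreatest {x : ℝ | pPoly d (m-1) n x = 0} lamInf)
    (lamSeq : ℕ → ℝ)
    (hlamSeq : ∀ N, 2 ≤ N →
      IsGreatest {x : ℝ | pPoly d m (Function.update n m N) x = 0} (lamSeq N)) :
    Filter.Tendsto lamSeq Filter.atTop (nhds lamInf) ∧
    ∀ N, 2 ≤ N → lamSeq N ≤ lamInf := by
  have hdr : (4:ℝ) ≤ (d:ℝ) := by exact_mod_cast hd
  -- cardinality bounds
  have hcard1 : ((Finset.Icc 2 (m-1)).card : ℝ) ≤ 2*(d:ℝ)-3 := by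
    have h1 : (Finset.Icc 2 (m-1)).card = m - 1 + 1 - 2 := Nat.card_Icc _ _
    have h2 : (Finset.Icc 2 (m-1)).card ≤ 2*d - 3 := by omega
    calc ((Finset.Icc 2 (m-1)).card : ℝ) ≤ ((2*d-3 : ℕ) : ℝ) := by exact_mod_cast h2
      _ ≤ 2*(d:ℝ)-3 := by
          have : (3:ℕ) ≤ 2*d := by omega
          push_cast [Nat.cast_sub this]
          ring_nf
          norm_num
  have hcard2 : ((Finset.Icc 2 m).card : ℝ) ≤ 2*(d:ℝ)-3 := by
    have h1 : (Finset.Icc 2 m).card = m + 1 - 2 := Nat.card_Icc _ _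
    have h2 : (Finset.Icc 2 m).card ≤ 2*d - 3 := by omega
    calc ((Finset.Icc 2 m).card : ℝ) ≤ ((2*d-3 : ℕ) : ℝ) := by exact_mod_cast h2
      _ ≤ 2*(d:ℝ)-3 := by
          have : (3:ℕ) ≤ 2*d := by omega
          push_cast [Nat.cast_sub this]
          ring_nf
          norm_num
  have hn2' : ∀ N, 2 ≤ N → ∀ i ∈ Finset.Icc 2 m, 2 ≤ Function.update n m N i := by
    intro N hN i hi
    rcases eq_or_ne i m with rfl | hne
    · simpa using hN
    · rw [Function.update_of_ne hne]
      apply hn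
      simp only [Finset.mem_Icc] at hi ⊢
      omega
  obtain ⟨h2lam, hlamd, hup, hneg⟩ := root_facts d (m-1) n hd hcard1 hn hlamInf
  -- the upper bound
  have hbound : ∀ N, 2 ≤ N → lamSeq N ≤ lamInf := by
    intro N hN
    by_contra h
    push_neg at h
    have hx0 : (0:ℝ) < lamSeq N := by linarith
    have hroot : pPoly d m (Function.update n m N) (lamSeq N) = 0 := (hlamSeq N hN).1
    rw [pPoly_rec d m N n hm1 (lamSeq N)] at hroot
    have hpos1 : 0 < pPoly d (m-1) n (lamSeq N) := hup _ h
    have hpos2 : 0 < (lamSeq N)^N + 1 := by positivity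
    have hpos3 : 0 < ∏ i ∈ Finset.Icc 2 (m-1), ((lamSeq N)^(n i)+1) := prodPos _ n _ hx0
    nlinarith
  refine ⟨?_, hbound⟩
  -- convergence
  rw [Metric.tendsto_atTop]
  intro ε hε
  set x₀ := max ((2+lamInf)/2) (lamInf - ε/2) with hx₀def
  have hx₀2 : 2 < x₀ := lt_of_lt_of_le (by linarith) (le_max_left _ _)
  have hx₀lam : x₀ < lamInf := max_lt (by linarith) (by linarith)
  have hx₀close : lamInf - x₀ < ε := by
    have h := le_max_right ((2+lamInf)/2) (lamInf - ε/2)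
    rw [← hx₀def] at h
    linarith
  have hpneg : pPoly d (m-1) n x₀ < 0 := hneg x₀ hx₀2.le hx₀lam
  set P₀ := ∏ i ∈ Finset.Icc 2 (m-1), (x₀^(n i)+1) with hP₀
  have hP₀pos : 0 < P₀ := prodPos _ n _ (by linarith)
  -- eventually `pPoly d m` at `x₀` is very negative
  have htend : Filter.Tendsto (fun N : ℕ => (x₀^N+1) * pPoly d (m-1) n x₀ + x₀ * P₀)
      Filter.atTop Filter.atBot := by
    apply Filter.tendsto_atBot_add_const_right
    apply Filter.Tendsto.atTop_mul_const_of_neg hpneg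
    apply Filter.tendsto_atTop_add_const_right
    exact tendsto_pow_atTop_atTop_of_one_lt (by linarith)
  obtain ⟨N₀, hN₀⟩ := Filter.eventually_atTop.mp (htend.eventually_lt_atBot 0)
  refine ⟨max N₀ 2, fun N hN => ?_⟩
  have hN2 : 2 ≤ N := le_trans (le_max_right _ _) hN
  have hNN₀ : N₀ ≤ N := le_trans (le_max_left _ _) hN
  have hpmx₀ : pPoly d m (Function.update n m N) x₀ < 0 := by
    rw [pPoly_rec d m N n hm1 x₀]
    exact hN₀ N hNN₀
  have hpmd : 0 < pPoly d m (Function.update n m N) d :=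
    p_pos_big d m (Function.update n m N) hd le_rfl
  have hx₀d : x₀ < (d:ℝ) := by linarith
  obtain ⟨c, hc, hpc⟩ := intermediate_value_Ioo hx₀d.le
    (pPoly_continuous_s5 d m (Function.update n m N)).continuousOn
    (⟨hpmx₀, hpmd⟩ : (0:ℝ) ∈ Set.Ioo _ _)
  have hclam : c ≤ lamSeq N := (hlamSeq N hN2).2 hpc
  have hlow : x₀ < lamSeq N := lt_of_lt_of_le hc.1 hclam
  have hhigh : lamSeq N ≤ lamInf := hbound N hN2
  rw [Real.dist_eq]
  rw [abs_lt]
  constructor <;> linarith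
end
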